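/- Let n ≥ 1 be an integer, let ℓ < M be nonnegative integers, let J be a finite subset of {ℓ, ℓ+1, …, M} containing both ℓ and M, let θ > 0 and σ_M ≥ 0 be reals, and set σ = σ_M + (M−ℓ)θ. For η ∈ [0,∞) define g(η) = min_{j ∈ J} ( (j−ℓ)η + 2(σ_M + (M−j)θ) ). Then: (i) g(η) = 2σ_M + (M−ℓ)·min(η, 2θ) for all η ≥ 0; and (ii) if moreover 2σ < n + 2θ, then n + η − g(η) > 0 for all η ≥ 0 and sup_{η ∈ [0,∞)} (n+η)/(n+η−g(η)) = 1 + 2σ/(n + 2θ − 2σ), the supremum being attained at η = 2θ. (This computes the critical exponent p_c for a quasi-homogeneous operator L = Σ_{j∈J} b_j (−Δ)^{σ_M + (M−j)θ} ∂_t^j with nonlinearity |∂_t^ℓ u|^p.) -/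

import Mathlib

/-- critical exponent of a quasi-homogeneous operator.  With `σ_j =
σ_M + (M−j)θ` for `j ∈ J ⊆ {ℓ,…,M}`, `ℓ, M ∈ J`, one has
(i) `g(η) = 2σ_M + (M−ℓ)·min(η, 2θ)` for all `η ≥ 0`, and
(ii) if `2σ < n + 2θ` with `σ = σ_M + (M−ℓ)θ`, then the denominator of `h` is positive
and `sup_{η ≥ 0} h(η) = 1 + 2σ/(n + 2θ − 2σ)`, attained at `η = 2θ`. -/
theorem stmt15 (n : ℕ) (hn : 1 ≤ n) (ℓ M : ℕ) (hlM : ℓ < M)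
    (J : Finset ℕ) (hJ : J ⊆ Finset.Icc ℓ M) (hℓJ : ℓ ∈ J) (hMJ : M ∈ J)
    (θ : ℝ) (hθ : 0 < θ) (σM : ℝ) (hσM : 0 ≤ σM) :
    (∀ η : ℝ, 0 ≤ η →
      J.inf' ⟨ℓ, hℓJ⟩
          (fun j => ((j : ℝ) - ℓ) * η + 2 * (σM + ((M : ℝ) - j) * θ))
        = 2 * σM + ((M : ℝ) - ℓ) * min η (2 * θ)) ∧
    (2 * (σM + ((M : ℝ) - ℓ) * θ) < (n : ℝ) + 2 * θ →
      (∀ η : ℝ, 0 ≤ η →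
        0 < (n : ℝ) + η - J.inf' ⟨ℓ, hℓJ⟩
            (fun j => ((j : ℝ) - ℓ) * η + 2 * (σM + ((M : ℝ) - j) * θ))) ∧
      IsGreatest {x : ℝ | ∃ η : ℝ, 0 ≤ η ∧
          x = ((n : ℝ) + η) / ((n : ℝ) + η - J.inf' ⟨ℓ, hℓJ⟩
            (fun j => ((j : ℝ) - ℓ) * η + 2 * (σM + ((M : ℝ) - j) * θ)))}
        (1 + 2 * (σM + ((M : ℝ) - ℓ) * θ) /
          ((n : ℝ) + 2 * θ - 2 * (σM + ((M : ℝ) - ℓ) * θ))) ∧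
      ((n : ℝ) + 2 * θ) / ((n : ℝ) + 2 * θ - J.inf' ⟨ℓ, hℓJ⟩
            (fun j => ((j : ℝ) - ℓ) * (2 * θ) + 2 * (σM + ((M : ℝ) - j) * θ)))
        = 1 + 2 * (σM + ((M : ℝ) - ℓ) * θ) /
            ((n : ℝ) + 2 * θ - 2 * (σM + ((M : ℝ) - ℓ) * θ))) := by
  have hML : (ℓ : ℝ) < (M : ℝ) := by exact_mod_cast hlM
  have hML1 : (1 : ℝ) ≤ (M : ℝ) - ℓ := by
    have : (ℓ : ℝ) + 1 ≤ (M : ℝ) := by exact_mod_cast hlM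
    linarith
  have hg : ∀ η : ℝ, 0 ≤ η →
      J.inf' ⟨ℓ, hℓJ⟩
          (fun j => ((j : ℝ) - ℓ) * η + 2 * (σM + ((M : ℝ) - j) * θ))
        = 2 * σM + ((M : ℝ) - ℓ) * min η (2 * θ) := by
    intro η hη
    apply le_antisymm
    · rcases le_total η (2 * θ) with h | h
      · rw [min_eq_left h]
        calc J.inf' ⟨ℓ, hℓJ⟩ _ ≤ ((M : ℝ) - ℓ) * η + 2 * (σM + ((M : ℝ) - M) * θ) :=
              Finset.inf'_le _ hMJ
          _ = 2 * σM + ((M : ℝ) - ℓ) * η := by ring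
      · rw [min_eq_right h]
        calc J.inf' ⟨ℓ, hℓJ⟩ _ ≤ ((ℓ : ℝ) - ℓ) * η + 2 * (σM + ((M : ℝ) - ℓ) * θ) :=
              Finset.inf'_le _ hℓJ
          _ = 2 * σM + ((M : ℝ) - ℓ) * (2 * θ) := by ring
    · apply Finset.le_inf'
      intro j hj
      have hj' := Finset.mem_Icc.mp (hJ hj)
      have h1 : (ℓ : ℝ) ≤ (j : ℝ) := by exact_mod_cast hj'.1
      have h2 : (j : ℝ) ≤ (M : ℝ) := by exact_mod_cast hj'.2
      rcases le_total η (2 * θ) with h | h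
      · rw [min_eq_left h]
        nlinarith [mul_nonneg (by linarith : (0:ℝ) ≤ (M:ℝ) - j) (by linarith : (0:ℝ) ≤ 2*θ - η)]
      · rw [min_eq_right h]
        nlinarith [mul_nonneg (by linarith : (0:ℝ) ≤ (j:ℝ) - ℓ) (by linarith : (0:ℝ) ≤ η - 2*θ)]
  refine ⟨hg, fun hcrit => ?_⟩
  set σ : ℝ := σM + ((M : ℝ) - ℓ) * θ with hσdef
  have hσ0 : 0 ≤ σ := by positivity
  have hD : (0 : ℝ) < (n : ℝ) + 2 * θ - 2 * σ := by linarith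
  have hn1 : (1 : ℝ) ≤ (n : ℝ) := by exact_mod_cast hn
  have hden : ∀ η : ℝ, 0 ≤ η →
      0 < (n : ℝ) + η - (2 * σM + ((M : ℝ) - ℓ) * min η (2 * θ)) := by
    intro η hη
    rcases le_total η (2 * θ) with h | h
    · rw [min_eq_left h]
      nlinarith [mul_nonneg (by linarith : (0:ℝ) ≤ (M:ℝ) - ℓ - 1) (by linarith : (0:ℝ) ≤ 2*θ - η)]
    · rw [min_eq_right h]
      simp only [hσdef] at hD ⊢
      nlinarith
  have hdenpos : ∀ η : ℝ, 0 ≤ η →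
      0 < (n : ℝ) + η - J.inf' ⟨ℓ, hℓJ⟩
          (fun j => ((j : ℝ) - ℓ) * η + 2 * (σM + ((M : ℝ) - j) * θ)) := by
    intro η hη; rw [hg η hη]; exact hden η hη
  have hg2θ : J.inf' ⟨ℓ, hℓJ⟩
      (fun j => ((j : ℝ) - ℓ) * (2 * θ) + 2 * (σM + ((M : ℝ) - j) * θ)) = 2 * σ := by
    rw [hg (2 * θ) (by positivity), min_self, hσdef]; ring
  have hval : ((n : ℝ) + 2 * θ) / ((n : ℝ) + 2 * θ - 2 * σ)
      = 1 + 2 * σ / ((n : ℝ) + 2 * θ - 2 * σ) := by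
    field_simp
    ring
  refine ⟨hdenpos, ⟨⟨2 * θ, by positivity, ?_⟩, ?_⟩, by rw [hg2θ]; exact hval⟩
  · rw [hg (2 * θ) (by positivity), min_self]
    rw [show 2 * σM + ((M : ℝ) - ℓ) * (2 * θ) = 2 * σ by rw [hσdef]; ring]
    exact hval.symm
  · rintro x ⟨η, hη, rfl⟩
    rw [hg η hη, ← hval]
    rw [div_le_div_iff₀ (hden η hη) hD]
    have h2σM : 2 * σM < (n : ℝ) := by
      simp only [hσdef] at hD
      nlinarith [mul_nonneg (by linarith : (0:ℝ) ≤ (M:ℝ) - ℓ - 1) hθ.le]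
    rcases le_total η (2 * θ) with h | h
    · rw [min_eq_left h]
      -- diff = (2θ-η)((M-ℓ)n - 2σM)
      nlinarith [mul_nonneg (by linarith : (0:ℝ) ≤ 2*θ - η)
        (by nlinarith : (0:ℝ) ≤ ((M:ℝ) - ℓ) * n - 2 * σM)]
    · rw [min_eq_right h]
      simp only [hσdef]
      nlinarith [mul_nonneg hσ0 (by linarith : (0:ℝ) ≤ η - 2*θ)]
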